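/- Let m, k, n_u, n_t be integers with 0 ≤ n_u < k, k − n_u ≤ n_t, and n_u + n_t ≤ m. Then δ(n_u, n_t, k) = (1 / C(n_t − 1, k − n_u − 1)) · Σ_{δ ∈ ℐ(n_u, n_t, k)} δ, where C(·,·) denotes the binomial coefficient. -/

import Mathlib

/-- The step direction `δ(n_u, n_t, k) ∈ ℝ^m`: first `n_u` entries equal
`n_t/(k − n_u)`, next `n_t` entries equal `1`, remaining entries equal `0`. -/
noncomputable def deltaVec (m nu nt k : ℕ) : Fin m → ℝ :=
  fun i =>
    if (i : ℕ) < nu then (nt : ℝ) / ((k : ℝ) - (nu : ℝ))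
    else if (i : ℕ) < nu + nt then 1 else 0

open Classical in
/-- `ℐ(n_u, n_t, k)`: the set of `k`-hot indicator vectors whose first `n_u`
entries equal `1` and whose `1`s all occur in the first `n_u + n_t` entries. -/
noncomputable def idxVecs (m nu nt k : ℕ) : Finset (Fin m → ℝ) :=
  ((Finset.univ : Finset (Finset (Fin m))).filter
      (fun S => S.card = k ∧ (∀ i : Fin m, (i : ℕ) < nu → i ∈ S) ∧
        (∀ i : Fin m, i ∈ S → (i : ℕ) < nu + nt))).image
    (fun S => fun i => if i ∈ S then (1 : ℝ) else 0)

open Finset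

lemma filter_powersetCard_mem {α : Type*} [DecidableEq α] (s : Finset α) (i : α)
    (hi : i ∈ s) (r : ℕ) :
    ((s.powersetCard (r+1)).filter (fun T => i ∈ T))
      = ((s.erase i).powersetCard r).image (insert i) := by
  conv_lhs => rw [← insert_erase hi]
  rw [powersetCard_succ_insert (notMem_erase i s), filter_union]
  rw [filter_eq_empty_iff.2, filter_eq_self.2, empty_union]
  · intro T hT
    simp only [mem_image] at hT
    obtain ⟨T', _, rfl⟩ := hT
    exact mem_insert_self i T'
  · intro T hT
    have := (mem_powersetCard.1 hT).1
    exact fun hiT => (notMem_erase i s) (this hiT)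

lemma card_filter_powersetCard_mem {α : Type*} [DecidableEq α] (s : Finset α) (i : α)
    (hi : i ∈ s) (r : ℕ) :
    ((s.powersetCard (r+1)).filter (fun T => i ∈ T)).card = (s.card - 1).choose r := by
  rw [filter_powersetCard_mem s i hi r, card_image_of_injOn, card_powersetCard,
    card_erase_of_mem hi]
  intro T hT T' hT' h
  have h1 : i ∉ T := fun hc => (notMem_erase i s) ((mem_powersetCard.1 hT).1 hc)
  have h2 : i ∉ T' := fun hc => (notMem_erase i s) ((mem_powersetCard.1 hT').1 hc)
  rw [← erase_insert h1, ← erase_insert h2, h]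

/-- `δ(n_u,n_t,k)` is the average `(1 / C(n_t−1, k−n_u−1)) Σ_{δ ∈ ℐ(n_u,n_t,k)} δ`. -/
theorem deltaVec_eq_avg_idxVecs (m nu nt k : ℕ) (h1 : nu < k) (h2 : k - nu ≤ nt)
    (h3 : nu + nt ≤ m) :
    deltaVec m nu nt k
      = (1 / ((nt - 1).choose (k - nu - 1) : ℝ)) • ∑ a ∈ idxVecs m nu nt k, a := by
  classical
  set r : ℕ := k - nu with hrdef
  have hr1 : 1 ≤ r := by omega
  have hnt1 : 1 ≤ nt := by omega
  -- the ambient sets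
  have hAlt : ∀ x ∈ Finset.range nu, x < m := fun x hx => by
    have := Finset.mem_range.1 hx; omega
  have hBlt : ∀ x ∈ Finset.Ico nu (nu + nt), x < m := fun x hx => by
    have := Finset.mem_Ico.1 hx; omega
  set A : Finset (Fin m) := (Finset.range nu).attachFin hAlt with hAdef
  set B : Finset (Fin m) := (Finset.Ico nu (nu + nt)).attachFin hBlt with hBdef
  have hAmem : ∀ i : Fin m, i ∈ A ↔ (i : ℕ) < nu := by
    intro i; simp [hAdef, mem_attachFin]
  have hBmem : ∀ i : Fin m, i ∈ B ↔ nu ≤ (i : ℕ) ∧ (i : ℕ) < nu + nt := by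
    intro i; simp [hBdef, mem_attachFin]
  have hAcard : A.card = nu := by simp [hAdef, card_attachFin]
  have hBcard : B.card = nt := by simp [hBdef, card_attachFin]
  have hdisj : Disjoint A B := by
    rw [disjoint_left]
    intro a ha hb
    have := (hAmem a).1 ha; have := (hBmem a).1 hb; omega
  -- the index family as a Finset of Finsets
  set F : Finset (Finset (Fin m)) := ((Finset.univ : Finset (Finset (Fin m))).filter
      (fun S => S.card = k ∧ (∀ i : Fin m, (i : ℕ) < nu → i ∈ S) ∧
        (∀ i : Fin m, i ∈ S → (i : ℕ) < nu + nt))) with hFdef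
  have hFchar : F = (B.powersetCard r).image (fun T => A ∪ T) := by
    ext S
    simp only [hFdef, mem_filter, mem_univ, true_and, mem_image, mem_powersetCard]
    constructor
    · rintro ⟨hcard, hlow, hup⟩
      refine ⟨S \ A, ⟨?_, ?_⟩, ?_⟩
      · intro x hx
        rw [mem_sdiff] at hx
        rw [hBmem]
        have h1 := hup x hx.1
        have h2 := hx.2
        rw [hAmem] at h2
        omega
      · have hAS : A ⊆ S := fun x hx => hlow x ((hAmem x).1 hx)
        rw [card_sdiff_of_subset hAS, hcard, hAcard]
      · have hAS : A ⊆ S := fun x hx => hlow x ((hAmem x).1 hx)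
        rw [union_sdiff_of_subset hAS]
    · rintro ⟨T, ⟨hTB, hTcard⟩, rfl⟩
      have hdT : Disjoint A T := hdisj.mono_right hTB
      refine ⟨?_, ?_, ?_⟩
      · rw [card_union_of_disjoint hdT, hAcard, hTcard]; omega
      · intro i hi; exact mem_union_left T ((hAmem i).2 hi)
      · intro i hi
        rcases mem_union.1 hi with h | h
        · have := (hAmem i).1 h; omega
        · exact ((hBmem i).1 (hTB h)).2
  have hinj : Set.InjOn (fun T => A ∪ T) (B.powersetCard r) := by
    intro T hT T' hT' h
    have hdT : Disjoint A T := hdisj.mono_right (mem_powersetCard.1 hT).1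
    have hdT' : Disjoint A T' := hdisj.mono_right (mem_powersetCard.1 hT').1
    have : (A ∪ T) \ A = (A ∪ T') \ A := by
      simpa using congrArg (fun S => S \ A) h
    rwa [union_sdiff_left, union_sdiff_left, sdiff_eq_self_of_disjoint hdT.symm,
      sdiff_eq_self_of_disjoint hdT'.symm] at this
  -- rewrite the sum over idxVecs as a sum over F
  have hsum : ∑ a ∈ idxVecs m nu nt k, a
      = ∑ S ∈ F, (fun i => if i ∈ S then (1 : ℝ) else 0) := by
    unfold idxVecs
    refine Finset.sum_image ?_
    intro S hS T hT h
    ext j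
    have := congrFun h j
    by_cases hj : j ∈ S <;> by_cases hj' : j ∈ T <;> simp_all
  -- nonvanishing of the binomial coefficient
  have hchoose_pos : 0 < (nt - 1).choose (r - 1) := Nat.choose_pos (by omega)
  have hchoose_ne : ((nt - 1).choose (r - 1) : ℝ) ≠ 0 := by
    exact_mod_cast hchoose_pos.ne'
  funext i
  rw [hsum, Pi.smul_apply, Finset.sum_apply, Finset.sum_boole, smul_eq_mul]
  show deltaVec m nu nt k i = _
  rw [deltaVec]
  by_cases hi1 : (i : ℕ) < nu
  · -- first case: count = nt.choose r
    have hfilt : F.filter (fun S => i ∈ S) = F := by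
      refine filter_eq_self.2 ?_
      intro S hS
      rw [hFdef, mem_filter] at hS
      exact hS.2.2.1 i hi1
    have hcount : F.card = nt.choose r := by
      rw [hFchar, card_image_of_injOn hinj, card_powersetCard, hBcard]
    rw [if_pos hi1, hfilt, hcount]
    have hkey : nt * (nt - 1).choose (r - 1) = nt.choose r * r := by
      have := Nat.add_one_mul_choose_eq (nt - 1) (r - 1)
      have e1 : nt - 1 + 1 = nt := by omega
      have e2 : r - 1 + 1 = r := by omega
      rwa [e1, e2] at this
    have hkeyR : (nt : ℝ) * ((nt - 1).choose (r - 1) : ℝ) = (nt.choose r : ℝ) * r := by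
      exact_mod_cast congrArg (Nat.cast : ℕ → ℝ) hkey
    have hkr : (k : ℝ) - (nu : ℝ) = (r : ℝ) := by
      rw [hrdef]; push_cast [Nat.cast_sub h1.le]; ring
    have hrne : (r : ℝ) ≠ 0 := by
      exact_mod_cast (by omega : r ≠ 0)
    rw [hkr]
    field_simp
    linarith [hkeyR]
  · by_cases hi2 : (i : ℕ) < nu + nt
    · -- middle case: count = (nt-1).choose (r-1)
      have hiB : i ∈ B := (hBmem i).2 ⟨by omega, hi2⟩
      have hiA : i ∉ A := fun h => hi1 ((hAmem i).1 h)
      have hfilt : F.filter (fun S => i ∈ S)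
          = ((B.powersetCard r).filter (fun T => i ∈ T)).image (fun T => A ∪ T) := by
        rw [hFchar, filter_image]
        congr 1
        apply filter_congr
        intro T hT
        simp only [Function.comp_apply, mem_union]
        constructor
        · rintro (h | h)
          · exact absurd h hiA
          · exact h
        · intro h; exact Or.inr h
      have hcount : (F.filter (fun S => i ∈ S)).card = (nt - 1).choose (r - 1) := by
        rw [hfilt, card_image_of_injOn (hinj.mono (filter_subset _ _))]
        have : r = (r - 1) + 1 := by omega
        rw [this, card_filter_powersetCard_mem B i hiB (r - 1), hBcard]
        congr 1
      rw [if_neg hi1, if_pos hi2, hcount, one_div, inv_mul_cancel₀ hchoose_ne]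
    · -- last case: count = 0
      have hfilt : F.filter (fun S => i ∈ S) = ∅ := by
        refine filter_eq_empty_iff.2 ?_
        intro S hS hiS
        rw [hFdef, mem_filter] at hS
        exact hi2 (hS.2.2.2 i hiS)
      rw [if_neg hi1, if_neg hi2, hfilt]
      simp
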